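/- For every positive integer n, the identity Σ_{w=1}^n 2^{n−w}·w·C(n,w)·C(w−1, ⌈w/2⌉−1) = (n/2)·C(2n,n) holds. Equivalently, the average of λ(x,y) over all pairs (x,y) ∈ X×X equals Λ_n = (n/2^{n+1})·C(2n,n). -/

import Mathlib

open Finset


private lemma L0 (w k : ℕ) : ((w:ℝ) - k) * (w.choose k) = (k+1) * (w.choose (k+1)) := by
  rcases le_or_gt k w with h | h
  · have hc : ((w.choose (k+1) : ℝ)) * (k+1) = (w.choose k) * ((w - k : ℕ) : ℝ) := by
      exact_mod_cast congrArg (Nat.cast (R := ℝ)) (Nat.choose_succ_right_eq w k)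
    rw [Nat.cast_sub h] at hc
    linarith
  · rw [Nat.choose_eq_zero_of_lt h, Nat.choose_eq_zero_of_lt (by omega)]
    simp

private lemma sumT (w t : ℕ) :
    ∑ k ∈ range (t+1), ((w:ℝ) - 2*k) * (w.choose k) = (t+1) * (w.choose (t+1)) := by
  induction t with
  | zero => simp [Nat.choose_one_right]
  | succ t ih =>
      rw [Finset.sum_range_succ, ih]
      have := L0 w (t+1)
      push_cast at this ⊢
      linear_combination this

private lemma LABS (w : ℕ) :
    ∑ k ∈ range (w+1), |(w:ℝ) - 2*k| * (w.choose k)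
      = 2 * ((w+1)/2 : ℕ) * (w.choose ((w+1)/2)) := by
  set m := (w+1)/2 with hm
  have habs : ∀ a : ℝ, |a| = 2 * max a 0 - a := by
    intro a
    rcases le_or_gt a 0 with h | h
    · rw [abs_of_nonpos h, max_eq_right h]; ring
    · rw [abs_of_pos h, max_eq_left h.le]; ring
  have h1 : ∑ k ∈ range (w+1), |(w:ℝ) - 2*k| * (w.choose k)
      = 2 * (∑ k ∈ range (w+1), max ((w:ℝ) - 2*k) 0 * (w.choose k))
        - ∑ k ∈ range (w+1), ((w:ℝ) - 2*k) * (w.choose k) := by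
    rw [Finset.mul_sum, ← Finset.sum_sub_distrib]
    refine Finset.sum_congr rfl fun k _ => by rw [habs]; ring
  rw [h1, sumT w w, Nat.choose_succ_self]
  have h2 : ∑ k ∈ range (w+1), max ((w:ℝ) - 2*k) 0 * (w.choose k)
      = ∑ k ∈ range m, ((w:ℝ) - 2*k) * (w.choose k) := by
    rw [← Finset.sum_subset (Finset.range_subset_range.2 (by omega : m ≤ w+1))]
    · refine Finset.sum_congr rfl fun k hk => ?_
      have hk' : k < m := Finset.mem_range.1 hk
      have : (2*(k:ℝ)) ≤ w := by exact_mod_cast (by omega : 2*k ≤ w)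
      rw [max_eq_left (by linarith)]
    · intro k hk hk2
      have hk' : m ≤ k := Nat.le_of_not_lt (fun h => hk2 (Finset.mem_range.2 h))
      have : (w:ℝ) ≤ 2*k := by exact_mod_cast (by omega : w ≤ 2*k)
      rw [max_eq_right (by linarith)]
      ring
  rw [h2]
  rcases Nat.eq_zero_or_pos m with h | h
  · have hw : w = 0 := by omega
    subst hw; simp [h]
  · obtain ⟨t, ht⟩ : ∃ t, m = t + 1 := ⟨m-1, by omega⟩
    rw [ht, sumT w t]
    push_cast
    ring

private lemma L1 (N k : ℕ) : ((N:ℝ)+1) * (N.choose k) = ((N+1).choose (k+1)) * (k+1) := by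
  have := Nat.add_one_mul_choose_eq N k
  exact_mod_cast congrArg (Nat.cast (R := ℝ)) this

private lemma LVAND (n : ℕ) (hn : 1 ≤ n) :
    ∑ d ∈ range n, 2 * ((d:ℝ)+1) * ((2*n).choose (n+d+1)) = n * ((2*n).choose n) := by
  obtain ⟨p, rfl⟩ : ∃ p, n = p + 1 := ⟨n-1, by omega⟩
  set N := 2*(p+1) with hN
  have hc : ((N-1 : ℕ):ℝ) = (N:ℝ) - 1 := by
    have h1 : 1 ≤ N := by omega
    push_cast [Nat.cast_sub h1]; ring
  have hNval : (N:ℝ) = 2*((p:ℝ)+1) := by push_cast [hN]; ring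
  have key : ∀ d : ℕ, 2 * ((d:ℝ)+1) * (N.choose (p+1+d+1))
      = (N:ℝ) * ((N-1).choose (p+1+d)) - (N:ℝ) * ((N-1).choose (p+1+d+1)) := by
    intro d
    have hN1 : N - 1 + 1 = N := by omega
    have e1 : ((p:ℝ)+1+d+1) * (N.choose (p+1+d+1)) = (N:ℝ) * ((N-1).choose (p+1+d)) := by
      have h := L1 (N-1) (p+1+d)
      rw [hN1, hc] at h
      push_cast at h ⊢
      linarith [h]
    have e2 : ((N:ℝ) - ((p:ℝ)+1+d+1)) * (N.choose (p+1+d+1)) = (N:ℝ) * ((N-1).choose (p+1+d+1)) := by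
      have h1 := L0 N (p+1+d+1)
      have h2 := L1 (N-1) (p+1+d+1)
      rw [hN1, hc] at h2
      push_cast at h1 h2 ⊢
      linarith [h1, h2]
    push_cast at e1 e2 ⊢
    linear_combination e1 - e2 + ((N.choose (p+1+d+1)) : ℝ) * hNval
  have tele : ∑ d ∈ range (p+1),
      ((N:ℝ) * ((N-1).choose (p+1+d)) - (N:ℝ) * ((N-1).choose (p+1+d+1)))
      = (N:ℝ) * ((N-1).choose (p+1)) - (N:ℝ) * ((N-1).choose (p+1+(p+1))) := by
    have := Finset.sum_range_sub' (f := fun d => (N:ℝ) * ((N-1).choose (p+1+d))) (n := p+1)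
    simpa [← add_assoc] using this
  rw [Finset.sum_congr rfl (fun d _ => key d), tele]
  have hz : (N-1).choose (p+1+(p+1)) = 0 := Nat.choose_eq_zero_of_lt (by omega)
  rw [hz]
  have hsymm : (N-1).choose p = (N-1).choose (p+1) := by
    have h : N - 1 - p = p + 1 := by omega
    rw [← h]
    exact (Nat.choose_symm (by omega)).symm
  have hpas : N.choose (p+1) = (N-1).choose p + (N-1).choose (p+1) := by
    have h2 : N = (N-1) + 1 := by omega
    rw [h2]
    exact Nat.choose_succ_succ (N-1) p
  have hdbl : (N.choose (p+1) : ℝ) = 2 * ((N-1).choose (p+1)) := by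
    rw [hpas, hsymm]; push_cast; ring
  push_cast
  linear_combination (((N-1).choose (p+1) : ℕ) : ℝ) * hNval - ((p:ℝ)+1) * hdbl

private lemma LVAND2 (n : ℕ) :
    ∑ s ∈ range (2*n+1), |(s:ℝ) - n| * ((2*n).choose s) = n * ((2*n).choose n) := by
  rcases Nat.eq_zero_or_pos n with rfl | hn
  · norm_num
  have hsplit : range (2*n+1) = range (n+1) ∪ Finset.Ico (n+1) (2*n+1) := by
    rw [Finset.range_eq_Ico, ← Finset.Ico_union_Ico_eq_Ico (by omega : 0 ≤ n+1) (by omega : n+1 ≤ 2*n+1), Finset.range_eq_Ico]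
  have hdisj : Disjoint (range (n+1)) (Finset.Ico (n+1) (2*n+1)) := by
    rw [Finset.range_eq_Ico]
    exact Finset.Ico_disjoint_Ico_consecutive 0 (n+1) (2*n+1)
  rw [hsplit, Finset.sum_union hdisj]
  -- upper part
  have hup : ∑ s ∈ Finset.Ico (n+1) (2*n+1), |(s:ℝ) - n| * ((2*n).choose s)
      = ∑ d ∈ range n, ((d:ℝ)+1) * ((2*n).choose (n+d+1)) := by
    rw [Finset.sum_Ico_eq_sum_range]
    have h2 : 2*n+1 - (n+1) = n := by omega
    rw [h2]
    refine Finset.sum_congr rfl fun d _ => ?_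
    have h3 : |((n+1+d : ℕ):ℝ) - n| = (d:ℝ)+1 := by
      push_cast
      rw [abs_of_nonneg (by linarith)]
      ring
    rw [h3, show n+1+d = n+d+1 from by omega]
  -- lower part
  have hlow : ∑ s ∈ range (n+1), |(s:ℝ) - n| * ((2*n).choose s)
      = ∑ d ∈ range n, ((d:ℝ)+1) * ((2*n).choose (n+d+1)) := by
    rw [Finset.sum_range_succ]
    have hzero : |((n:ℕ):ℝ) - n| * ((2*n).choose n) = 0 := by simp
    rw [hzero, add_zero]
    rw [← Finset.sum_range_reflect (fun s => |(s:ℝ) - n| * ((2*n).choose s)) n]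
    refine Finset.sum_congr rfl fun d hd => ?_
    have hd' : d < n := Finset.mem_range.1 hd
    have h1 : ((n - 1 - d : ℕ):ℝ) = (n:ℝ) - 1 - d := by
      have : (1:ℕ) + d ≤ n := by omega
      push_cast [Nat.cast_sub (by omega : 1 + d ≤ n), Nat.sub_sub]
      ring
    have h2 : |((n-1-d : ℕ):ℝ) - n| = (d:ℝ)+1 := by
      rw [h1, abs_of_nonpos (by linarith), ]
      ring
    rw [h2]
    congr 2
    have hsym : (2*n).choose (n-1-d) = (2*n).choose (2*n - (n-1-d)) :=
      (Nat.choose_symm (by omega : n-1-d ≤ 2*n)).symm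
    rw [hsym]
    congr 1
    omega
  rw [hlow, hup, ← two_mul, ← LVAND n hn]
  rw [Finset.mul_sum]
  exact Finset.sum_congr rfl fun d _ => by ring

private lemma LVDM (n s : ℕ) :
    ∑ p ∈ (Finset.range (n+1) ×ˢ Finset.range (n+1)).filter (fun p => p.1 + p.2 = s),
      (n.choose p.1) * (n.choose p.2) = (2*n).choose s := by
  rw [two_mul, Nat.add_choose_eq]
  apply Finset.sum_subset
  · intro p hp
    rw [Finset.mem_filter] at hp
    exact Finset.HasAntidiagonal.mem_antidiagonal.2 hp.2
  · intro p hp hnp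
    have hps : p.1 + p.2 = s := Finset.HasAntidiagonal.mem_antidiagonal.1 hp
    have : p.1 > n ∨ p.2 > n := by
      by_contra h
      push_neg at h
      exact hnp (Finset.mem_filter.2 ⟨Finset.mem_product.2
        ⟨Finset.mem_range.2 (by omega), Finset.mem_range.2 (by omega)⟩, hps⟩)
    rcases this with h | h
    · rw [Nat.choose_eq_zero_of_lt h, zero_mul]
    · rw [Nat.choose_eq_zero_of_lt h, mul_zero]

private lemma LABS2 (n : ℕ) :
    ∑ i ∈ range (n+1), ∑ j ∈ range (n+1),
      (n.choose i : ℝ) * (n.choose j) * |(i:ℝ) - j| = n * ((2*n).choose n) := by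
  -- reflect j ↦ n - j
  have hrefl : ∀ i : ℕ, ∑ j ∈ range (n+1), (n.choose i : ℝ) * (n.choose j) * |(i:ℝ) - j|
      = ∑ j ∈ range (n+1), (n.choose i : ℝ) * (n.choose j) * |(i:ℝ) + j - n| := by
    intro i
    rw [← Finset.sum_range_reflect (fun j => (n.choose i : ℝ) * (n.choose j) * |(i:ℝ) - j|) (n+1)]
    refine Finset.sum_congr rfl fun j hj => ?_
    have hj' : j ≤ n := by have := Finset.mem_range.1 hj; omega
    have h1 : n + 1 - 1 - j = n - j := by omega
    rw [h1, Nat.choose_symm hj']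
    congr 1
    have h2 : ((n - j : ℕ):ℝ) = (n:ℝ) - j := by
      push_cast [Nat.cast_sub hj']; ring
    rw [h2, show (i:ℝ) - ((n:ℝ) - j) = (i:ℝ) + j - n from by ring]
  rw [Finset.sum_congr rfl (fun i _ => hrefl i)]
  rw [← Finset.sum_product']
  have hmap : ∀ p ∈ Finset.range (n+1) ×ˢ Finset.range (n+1), p.1 + p.2 ∈ range (2*n+1) := by
    intro p hp
    rw [Finset.mem_product, Finset.mem_range, Finset.mem_range] at hp
    exact Finset.mem_range.2 (by omega)
  rw [← Finset.sum_fiberwise_of_maps_to hmap]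
  rw [← LVAND2 n]
  refine Finset.sum_congr rfl fun s hs => ?_
  have : ∀ p ∈ (Finset.range (n+1) ×ˢ Finset.range (n+1)).filter (fun p => p.1 + p.2 = s),
      (n.choose p.1 : ℝ) * (n.choose p.2) * |(p.1:ℝ) + p.2 - n|
      = (n.choose p.1 : ℝ) * (n.choose p.2) * |(s:ℝ) - n| := by
    intro p hp
    have := (Finset.mem_filter.1 hp).2
    rw [← this]
    push_cast
    ring_nf
  rw [Finset.sum_congr rfl this, ← Finset.sum_mul]
  rw [show ∑ p ∈ (Finset.range (n+1) ×ˢ Finset.range (n+1)).filter (fun p => p.1 + p.2 = s),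
      (n.choose p.1 : ℝ) * (n.choose p.2) = (((2*n).choose s : ℕ) : ℝ) from by
    rw [← LVDM n s]; push_cast; rfl]
  ring

private lemma LCOUNT {n : ℕ} (D : Finset (Fin n)) (k : ℕ) :
    (Finset.univ.filter (fun v : Fin n → Bool => (D.filter fun j => v j).card = k)).card
      = D.card.choose k * 2^(n - D.card) := by
  classical
  have h := Finset.card_bij'
    (i := fun (v : Fin n → Bool) (hv : v ∈ Finset.univ.filter
        (fun v : Fin n → Bool => (D.filter fun j => v j).card = k)) =>
      ((D.filter fun j => v j, Dᶜ.filter fun j => v j) : Finset (Fin n) × Finset (Fin n)))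
    (j := fun (p : Finset (Fin n) × Finset (Fin n)) (hp : p ∈ (D.powersetCard k) ×ˢ Dᶜ.powerset) =>
      (fun x => decide (x ∈ p.1 ∪ p.2) : Fin n → Bool))
    ?_ ?_ ?_ ?_
  · rw [h, Finset.card_product, Finset.card_powersetCard, Finset.card_powerset, Finset.card_compl,
      Fintype.card_fin]
  · -- hi
    intro v hv
    rw [Finset.mem_filter] at hv
    rw [Finset.mem_product]
    exact ⟨Finset.mem_powersetCard.2 ⟨Finset.filter_subset _ _, hv.2⟩,
      Finset.mem_powerset.2 (Finset.filter_subset _ _)⟩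
  · -- hj
    intro p hp
    rw [Finset.mem_product, Finset.mem_powersetCard, Finset.mem_powerset] at hp
    rw [Finset.mem_filter]
    refine ⟨Finset.mem_univ _, ?_⟩
    have hfil : (D.filter fun j => (decide (j ∈ p.1 ∪ p.2) : Bool) = true) = p.1 := by
      ext a
      simp only [Finset.mem_filter, decide_eq_true_eq, Finset.mem_union]
      constructor
      · rintro ⟨haD, h | h⟩
        · exact h
        · exact absurd (Finset.mem_compl.1 (hp.2 h)) (fun hc => hc haD)
      · intro h
        exact ⟨hp.1.1 h, Or.inl h⟩
    have h2 := hp.1.2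
    rw [← hfil] at h2
    exact h2
  · -- left inverse
    intro v hv
    funext x
    by_cases hx : x ∈ D <;> by_cases hvx : v x <;>
      simp [Finset.mem_union, Finset.mem_filter, Finset.mem_compl, hx, hvx]
  · -- right inverse
    intro p hp
    rw [Finset.mem_product, Finset.mem_powersetCard, Finset.mem_powerset] at hp
    have h1 : (D.filter fun j => (decide (j ∈ p.1 ∪ p.2) : Bool) = true) = p.1 := by
      ext a
      simp only [Finset.mem_filter, decide_eq_true_eq, Finset.mem_union]
      constructor
      · rintro ⟨haD, h | h⟩
        · exact h
        · exact absurd (Finset.mem_compl.1 (hp.2 h)) (fun hc => hc haD)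
      · intro h
        exact ⟨hp.1.1 h, Or.inl h⟩
    have h2 : (Dᶜ.filter fun j => (decide (j ∈ p.1 ∪ p.2) : Bool) = true) = p.2 := by
      ext a
      simp only [Finset.mem_filter, decide_eq_true_eq, Finset.mem_union, Finset.mem_compl]
      constructor
      · rintro ⟨haD, h | h⟩
        · exact absurd (hp.1.1 h) haD
        · exact h
      · intro h
        exact ⟨Finset.mem_compl.1 (hp.2 h), Or.inr h⟩
    exact Prod.ext h1 h2
private lemma LSUMFIB {n : ℕ} (D : Finset (Fin n)) (g : ℕ → ℝ) :
    ∑ v : Fin n → Bool, g ((D.filter fun j => v j).card)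
      = ∑ k ∈ range (D.card + 1), (D.card.choose k : ℝ) * 2^(n - D.card) * g k := by
  classical
  have hmap : ∀ v ∈ (Finset.univ : Finset (Fin n → Bool)),
      (D.filter fun j => v j).card ∈ range (D.card + 1) := by
    intro v _
    exact Finset.mem_range.2 (Nat.lt_succ_of_le (Finset.card_le_card (Finset.filter_subset _ _)))
  rw [← Finset.sum_fiberwise_of_maps_to hmap (fun v => g ((D.filter fun j => v j).card))]
  refine Finset.sum_congr rfl fun k hk => ?_
  have : ∀ v ∈ Finset.univ.filter
      (fun v : Fin n → Bool => (D.filter fun j => v j).card = k),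
      g ((D.filter fun j => v j).card) = g k := by
    intro v hv
    rw [(Finset.mem_filter.1 hv).2]
  rw [Finset.sum_congr rfl this, Finset.sum_const, LCOUNT D k, nsmul_eq_mul]
  push_cast
  ring

/-- xor-with-mask equivalence of the cube -/
private def xorE (n : ℕ) (z : Fin n → Bool) : (Fin n → Bool) ≃ (Fin n → Bool) where
  toFun u := fun j => xor (u j) (z j)
  invFun u := fun j => xor (u j) (z j)
  left_inv u := by funext j; simp [Bool.xor_assoc]
  right_inv u := by funext j; simp [Bool.xor_assoc]

private lemma LSPHERE {n : ℕ} (u : Fin n → Bool) (h : ℕ → ℝ) :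
    ∑ x : Fin n → Bool, h (hammingDist x u)
      = ∑ i ∈ range (n + 1), (n.choose i : ℝ) * h i := by
  classical
  have key : ∑ x : Fin n → Bool, h (hammingDist x u)
      = ∑ v : Fin n → Bool, h (((Finset.univ : Finset (Fin n)).filter fun j => v j).card) := by
    rw [← Equiv.sum_comp (xorE n u) (fun x => h (hammingDist x u))]
    refine Finset.sum_congr rfl fun v _ => ?_
    congr 1
    show hammingDist (fun j => xor (v j) (u j)) u = _
    unfold hammingDist
    congr 1
    ext j
    simp only [Finset.mem_filter, Finset.mem_univ, true_and]
    cases hv : v j <;> cases hu : u j <;> simp [hv, hu]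
  rw [key, LSUMFIB]
  simp [Finset.card_univ]
private lemma LPAIR {n : ℕ} (x y : Fin n → Bool) :
    ∑ u : Fin n → Bool, |(hammingDist x u : ℝ) - (hammingDist y u : ℝ)|
      = ∑ k ∈ range (hammingDist x y + 1),
          ((hammingDist x y).choose k : ℝ) * 2^(n - hammingDist x y)
            * |(hammingDist x y : ℝ) - 2*k| := by
  classical
  set D : Finset (Fin n) := Finset.univ.filter (fun j => x j ≠ y j) with hD
  have hw : hammingDist x y = D.card := rfl
  -- Step A
  have stepA : ∀ u : Fin n → Bool,
      (hammingDist x u : ℝ) - (hammingDist y u : ℝ)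
        = (D.card : ℝ) - 2 * ((D.filter fun j => u j = x j).card) := by
    intro u
    have hxu : hammingDist x u
        = (D.filter fun j => x j ≠ u j).card + (Dᶜ.filter fun j => x j ≠ u j).card := by
      rw [show (hammingDist x u) = (Finset.univ.filter fun j => x j ≠ u j).card from rfl]
      rw [← Finset.card_union_of_disjoint
        (Finset.disjoint_filter_filter (disjoint_compl_right)),
        ← Finset.filter_union, Finset.union_compl]
    have hyu : hammingDist y u
        = (D.filter fun j => y j ≠ u j).card + (Dᶜ.filter fun j => y j ≠ u j).card := by
      rw [show (hammingDist y u) = (Finset.univ.filter fun j => y j ≠ u j).card from rfl]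
      rw [← Finset.card_union_of_disjoint
        (Finset.disjoint_filter_filter (disjoint_compl_right)),
        ← Finset.filter_union, Finset.union_compl]
    -- outside D the two predicates agree
    have hout : (Dᶜ.filter fun j => x j ≠ u j) = (Dᶜ.filter fun j => y j ≠ u j) := by
      refine Finset.filter_congr fun j hj => ?_
      have : x j = y j := by
        have := Finset.mem_compl.1 hj
        simp only [hD, Finset.mem_filter, Finset.mem_univ, true_and, not_not] at this
        exact this
      rw [this]
    -- on D : y j ≠ u j ↔ u j = x j
    have hyx : (D.filter fun j => y j ≠ u j) = (D.filter fun j => u j = x j) := by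
      refine Finset.filter_congr fun j hj => ?_
      have hxy : x j ≠ y j := by
        simp only [hD, Finset.mem_filter, Finset.mem_univ, true_and] at hj
        exact hj
      cases hx : x j <;> cases hy : y j <;> cases hu : u j <;>
        simp_all
    -- on D : counts of x-side and complement
    have hsplit : (D.filter fun j => x j ≠ u j).card + (D.filter fun j => u j = x j).card
        = D.card := by
      rw [show (D.filter fun j => u j = x j) = (D.filter fun j => ¬ (x j ≠ u j)) from by
        refine Finset.filter_congr fun j hj => ?_
        cases hx : x j <;> cases hu : u j <;> simp_all]
      exact Finset.card_filter_add_card_filter_not _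
    rw [hxu, hyu, hout, hyx]
    push_cast
    have : ((D.filter fun j => x j ≠ u j).card : ℝ)
        = (D.card : ℝ) - ((D.filter fun j => u j = x j).card : ℝ) := by
      have := congrArg (Nat.cast (R := ℝ)) hsplit
      push_cast at this
      linarith
    rw [this]
    ring
  -- rewrite the sum using step A
  have h1 : ∑ u : Fin n → Bool, |(hammingDist x u : ℝ) - (hammingDist y u : ℝ)|
      = ∑ u : Fin n → Bool, |(D.card : ℝ) - 2 * ((D.filter fun j => u j = x j).card)| := by
    exact Finset.sum_congr rfl fun u _ => by rw [stepA u]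
  -- reindex u ↦ v with u j = x j ↔ v j
  have h2 : ∑ u : Fin n → Bool, |(D.card : ℝ) - 2 * ((D.filter fun j => u j = x j).card)|
      = ∑ v : Fin n → Bool, |(D.card : ℝ) - 2 * ((D.filter fun j => v j).card)| := by
    rw [← Equiv.sum_comp (xorE n (fun j => ! (x j)))
      (fun u => |(D.card : ℝ) - 2 * ((D.filter fun j => u j = x j).card)|)]
    refine Finset.sum_congr rfl fun v _ => ?_
    have hfe : (D.filter fun j => ((xorE n fun i => !(x i)) v) j = x j)
        = (D.filter fun j => v j) := by
      refine Finset.filter_congr fun j hj => ?_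
      show (xor (v j) (!(x j)) = x j) ↔ (v j = true)
      cases hv : v j <;> cases hx : x j <;> simp [hv, hx]
    rw [hfe]
  rw [h1, h2, hw]
  rw [LSUMFIB D (fun k => |(D.card : ℝ) - 2 * k|)]

private lemma LDISTPAIRS {n : ℕ} (g : ℕ → ℝ) :
    ∑ x : Fin n → Bool, ∑ y : Fin n → Bool, g (hammingDist x y)
      = 2^n * ∑ w ∈ range (n+1), (n.choose w : ℝ) * g w := by
  classical
  have h1 : ∀ x : Fin n → Bool, ∑ y : Fin n → Bool, g (hammingDist x y)
      = ∑ w ∈ range (n+1), (n.choose w : ℝ) * g w := by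
    intro x
    rw [show (fun y => g (hammingDist x y)) = (fun y => g (hammingDist y x)) from
      funext fun y => by rw [hammingDist_comm]]
    exact LSPHERE x g
  rw [Finset.sum_congr rfl fun x _ => h1 x, Finset.sum_const, Finset.card_univ]
  simp [nsmul_eq_mul]
  try ring

private lemma P2core {n : ℕ} (u : Fin n → Bool) :
    ∑ x : Fin n → Bool, ∑ y : Fin n → Bool,
      |(hammingDist x u : ℝ) - (hammingDist y u : ℝ)|
      = n * ((2*n).choose n) := by
  classical
  have h1 : ∀ x : Fin n → Bool,
      ∑ y : Fin n → Bool, |(hammingDist x u : ℝ) - (hammingDist y u : ℝ)|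
      = ∑ j ∈ range (n+1), (n.choose j : ℝ) * |(hammingDist x u : ℝ) - j| :=
    fun x => LSPHERE u (fun j => |(hammingDist x u : ℝ) - j|)
  rw [Finset.sum_congr rfl fun x _ => h1 x, Finset.sum_comm]
  have h2 : ∀ j : ℕ,
      ∑ x : Fin n → Bool, (n.choose j : ℝ) * |(hammingDist x u : ℝ) - j|
      = (n.choose j : ℝ) * ∑ i ∈ range (n+1), (n.choose i : ℝ) * |(i : ℝ) - j| := by
    intro j
    rw [← Finset.mul_sum, LSPHERE u (fun i => |(i : ℝ) - (j:ℝ)|)]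
  rw [Finset.sum_congr rfl fun j _ => h2 j]
  rw [← LABS2 n, Finset.sum_comm]
  refine Finset.sum_congr rfl fun i _ => ?_
  rw [Finset.mul_sum]
  exact Finset.sum_congr rfl fun j _ => by ring

private lemma LM (w : ℕ) (hw : 1 ≤ w) :
    w * (w-1).choose ((w+1)/2 - 1) = ((w+1)/2) * (w.choose ((w+1)/2)) := by
  obtain ⟨v, rfl⟩ : ∃ v, w = v + 1 := ⟨w-1, by omega⟩
  have hm : 1 ≤ (v+1+1)/2 := by omega
  obtain ⟨t, ht⟩ : ∃ t, (v+1+1)/2 = t + 1 := ⟨(v+1+1)/2 - 1, by omega⟩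
  rw [ht]
  simp only [Nat.add_sub_cancel]
  rw [mul_comm (t+1)]
  exact Nat.add_one_mul_choose_eq v t

/-- For every positive `n`,
`Σ_{w=1}^n 2^{n−w}·w·C(n,w)·C(w−1,⌈w/2⌉−1) = (n/2)·C(2n,n)`; equivalently the average of
`λ(x,y) = (1/2)·Σ_u |d(x,u) − d(y,u)|` over all pairs of the Hamming space `{0,1}^n`
equals `Λ_n = (n/2^{n+1})·C(2n,n)`. -/
theorem lambda_average_hamming (n : ℕ) (hn : 1 ≤ n) :
    (∑ w ∈ Finset.Icc 1 n,
        (2 : ℝ) ^ (n - w) * w * Nat.choose n w * Nat.choose (w - 1) ((w + 1) / 2 - 1)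
      = (n : ℝ) / 2 * Nat.choose (2 * n) n)
    ∧ ((2 : ℝ) ^ (2 * n))⁻¹ *
        ∑ x : Fin n → Bool, ∑ y : Fin n → Bool,
          ((1 : ℝ) / 2) * ∑ u : Fin n → Bool,
            |(hammingDist x u : ℝ) - (hammingDist y u : ℝ)|
      = (n : ℝ) / 2 ^ (n + 1) * Nat.choose (2 * n) n := by
  classical
  -- the total triple sum
  have htotal : ∑ x : Fin n → Bool, ∑ y : Fin n → Bool,
        ((1 : ℝ) / 2) * ∑ u : Fin n → Bool,
          |(hammingDist x u : ℝ) - (hammingDist y u : ℝ)|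
      = (1/2 : ℝ) * 2^n * (n * ((2*n).choose n)) := by
    have hswap : ∑ x : Fin n → Bool, ∑ y : Fin n → Bool,
          ((1 : ℝ) / 2) * ∑ u : Fin n → Bool,
            |(hammingDist x u : ℝ) - (hammingDist y u : ℝ)|
        = (1/2 : ℝ) * ∑ u : Fin n → Bool, ∑ x : Fin n → Bool, ∑ y : Fin n → Bool,
            |(hammingDist x u : ℝ) - (hammingDist y u : ℝ)| := by
      simp only [Finset.mul_sum]
      calc ∑ x : Fin n → Bool, ∑ y : Fin n → Bool, ∑ u : Fin n → Bool,
            (1/2 : ℝ) * |(hammingDist x u : ℝ) - (hammingDist y u : ℝ)|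
          = ∑ x : Fin n → Bool, ∑ u : Fin n → Bool, ∑ y : Fin n → Bool,
            (1/2 : ℝ) * |(hammingDist x u : ℝ) - (hammingDist y u : ℝ)| :=
            Finset.sum_congr rfl fun x _ => Finset.sum_comm
        _ = ∑ u : Fin n → Bool, ∑ x : Fin n → Bool, ∑ y : Fin n → Bool,
            (1/2 : ℝ) * |(hammingDist x u : ℝ) - (hammingDist y u : ℝ)| :=
            Finset.sum_comm
    rw [hswap, Finset.sum_congr rfl fun u _ => P2core u, Finset.sum_const,
      Finset.card_univ]
    simp [nsmul_eq_mul]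
    ring
  constructor
  · -- Part 1
    set g : ℕ → ℝ := fun w => 2^(n-w) * (((w+1)/2 : ℕ) : ℝ) * (w.choose ((w+1)/2)) with hg
    have hpair : ∀ x y : Fin n → Bool,
        ((1 : ℝ) / 2) * ∑ u : Fin n → Bool,
          |(hammingDist x u : ℝ) - (hammingDist y u : ℝ)| = g (hammingDist x y) := by
      intro x y
      rw [LPAIR x y]
      set w := hammingDist x y
      have : ∑ k ∈ range (w + 1), (w.choose k : ℝ) * 2^(n - w) * |(w : ℝ) - 2*k|
          = 2^(n-w) * ∑ k ∈ range (w + 1), |(w : ℝ) - 2*k| * (w.choose k) := by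
        rw [Finset.mul_sum]
        exact Finset.sum_congr rfl fun k _ => by ring
      rw [this, LABS w, hg]
      ring
    have hA : ∑ x : Fin n → Bool, ∑ y : Fin n → Bool,
          ((1 : ℝ) / 2) * ∑ u : Fin n → Bool,
            |(hammingDist x u : ℝ) - (hammingDist y u : ℝ)|
        = 2^n * ∑ w ∈ range (n+1), (n.choose w : ℝ) * g w := by
      rw [Finset.sum_congr rfl fun x _ => Finset.sum_congr rfl fun y _ => hpair x y]
      exact LDISTPAIRS g
    have hS : ∑ w ∈ range (n+1), (n.choose w : ℝ) * g w = n * ((2*n).choose n) / 2 := by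
      have h2n : (2:ℝ)^n ≠ 0 := by positivity
      have hAB := hA.symm.trans htotal
      have hcan : (2:ℝ)^n * (∑ w ∈ range (n+1), (n.choose w : ℝ) * g w)
          = (2:ℝ)^n * ((n : ℝ) * ((2*n).choose n) / 2) := by linear_combination hAB
      exact mul_left_cancel₀ h2n hcan
    have hzero : (n.choose 0 : ℝ) * g 0 = 0 := by
      simp [hg]
    have hIcc : ∑ w ∈ Finset.Icc 1 n,
        (2 : ℝ) ^ (n - w) * w * Nat.choose n w * Nat.choose (w - 1) ((w + 1) / 2 - 1)
        = ∑ w ∈ range (n+1), (n.choose w : ℝ) * g w := by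
      rw [Finset.sum_range_succ']
      rw [hzero, add_zero]
      rw [← Finset.Ico_add_one_right_eq_Icc, Finset.sum_Ico_eq_sum_range,
        show n + 1 - 1 = n from rfl]
      refine Finset.sum_congr rfl fun i _ => ?_
      have h1i : 1 ≤ 1 + i := by omega
      have hlm := LM (1+i) h1i
      have hlm' : ((1+i : ℕ) : ℝ) * ((1+i-1).choose ((1+i+1)/2 - 1) : ℝ)
          = (((1+i+1)/2 : ℕ) : ℝ) * (((1+i).choose ((1+i+1)/2) : ℕ) : ℝ) := by
        exact_mod_cast congrArg (Nat.cast (R := ℝ)) hlm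
      have hidx : i + 1 = 1 + i := by omega
      rw [hidx]
      simp only [hg]
      linear_combination ((2:ℝ)^(n-(1+i)) * ((n.choose (1+i) : ℕ) : ℝ)) * hlm'
    rw [hIcc, hS]
    ring
  · -- Part 2
    rw [htotal]
    have h1 : (2:ℝ)^(2*n) = 2^n * 2^n := by rw [two_mul, pow_add]
    have h2 : (2:ℝ)^(n+1) = 2^n * 2 := by rw [pow_succ]
    have h2n : (2:ℝ)^n ≠ 0 := by positivity
    rw [h1, h2]
    push_cast
    field_simp
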